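/- Let H be a symmetric n×n real matrix, g ∈ ℝⁿ, σ the minimum eigenvalue of H, ε_R > 0, and let p solve (H + (|σ| + ε_R)I) p = -g. If ‖H‖ ≤ U_H, then gᵀp ≤ -(2U_H + ε_R)⁻¹·‖g‖². -/

import Mathlib

open scoped Matrix RealInnerProductSpace

/-- Descent property of the regularized Newton direction. -/
theorem stmt_3 (n : ℕ) (hn : 0 < n) (H : Matrix (Fin n) (Fin n) ℝ)
    (hH : H.IsHermitian) (U_H : ℝ)
    (hnorm : ‖Matrix.toEuclideanCLM (𝕜 := ℝ) H‖ ≤ U_H)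
    (σ : ℝ) (hσ : σ = ⨅ i, hH.eigenvalues i)
    (εR : ℝ) (hεR : 0 < εR)
    (g p : EuclideanSpace ℝ (Fin n))
    (hp : Matrix.toEuclideanLin (H + (|σ| + εR) • (1 : Matrix (Fin n) (Fin n) ℝ)) p = -g) :
    ⟪g, p⟫ ≤ -(2 * U_H + εR)⁻¹ * ‖g‖ ^ 2 := by
  haveI : Nonempty (Fin n) := ⟨⟨0, hn⟩⟩
  haveI : Nontrivial (EuclideanSpace ℝ (Fin n)) := inferInstance
  -- eigenvalue bounds
  set lam := hH.eigenvalues with hlam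
  have hlam_abs : ∀ i, |lam i| ≤ U_H := by
    intro i
    have hmem : lam i ∈ spectrum ℝ H := hH.eigenvalues_mem_spectrum_real i
    have hmem' : lam i ∈ spectrum ℝ (Matrix.toEuclideanCLM (𝕜 := ℝ) H) := by
      rwa [AlgEquiv.spectrum_eq (Matrix.toEuclideanCLM (𝕜 := ℝ)) H]
    calc |lam i| = ‖lam i‖ := rfl
      _ ≤ ‖Matrix.toEuclideanCLM (𝕜 := ℝ) H‖ := spectrum.norm_le_norm_of_mem hmem'
      _ ≤ U_H := hnorm
  have hUH : (0 : ℝ) ≤ U_H := le_trans (norm_nonneg _) hnorm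
  have hσ_le : ∀ i, σ ≤ lam i := by
    intro i
    rw [hσ]
    exact ciInf_le (Set.Finite.bddBelow (Set.finite_range _)) i
  have hσ_abs : |σ| ≤ U_H := by
    have h1 : -U_H ≤ σ := by
      rw [hσ]
      exact le_ciInf fun i => neg_le_of_abs_le (hlam_abs i)
    have h2 : σ ≤ U_H := le_trans (hσ_le ⟨0, hn⟩)
      (le_of_abs_le (hlam_abs ⟨0, hn⟩))
    exact abs_le.mpr ⟨h1, h2⟩
  set a := |σ| + εR with ha
  set cst := 2 * U_H + εR with hcst
  have hcst_pos : 0 < cst := by positivity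
  have hmu_pos : ∀ i, 0 < lam i + a := fun i => by
    have := hσ_le i
    have : -|σ| ≤ lam i := le_trans (neg_abs_le σ) this
    simp only [ha]; linarith
  have hmu_le : ∀ i, lam i + a ≤ cst := fun i => by
    have h1 := le_of_abs_le (hlam_abs i)
    simp only [ha, hcst]; linarith [hσ_abs]
  -- the eigenbasis
  set b := hH.eigenvectorBasis with hb
  -- repr of -g
  have hM : (H + a • (1 : Matrix (Fin n) (Fin n) ℝ)).IsHermitian := by
    rw [Matrix.IsHermitian, Matrix.conjTranspose_add, Matrix.conjTranspose_smul,
      Matrix.conjTranspose_one, hH.eq, star_trivial]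
  have hMsymm := (Matrix.isHermitian_iff_isSymmetric).mp hM
  have hrepr : ∀ i, b.repr (-g) i = (lam i + a) * b.repr p i := by
    intro i
    rw [← hp]
    rw [OrthonormalBasis.repr_apply_apply, OrthonormalBasis.repr_apply_apply]
    rw [← hMsymm (b i) p]
    have hbi : Matrix.toEuclideanLin (H + a • (1 : Matrix (Fin n) (Fin n) ℝ)) (b i)
        = (lam i + a) • b i := by
      apply (WithLp.equiv 2 (Fin n → ℝ)).injective
      rw [WithLp.equiv_apply, Matrix.ofLp_toEuclideanLin_apply]
      show (H + a • (1 : Matrix (Fin n) (Fin n) ℝ)) *ᵥ ⇑(b i) = _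
      rw [Matrix.add_mulVec, Matrix.smul_mulVec, Matrix.one_mulVec]
      rw [hb, hH.mulVec_eigenvectorBasis]
      show lam i • ⇑(b i) + a • ⇑(b i) = ⇑((lam i + a) • b i)
      funext j
      show lam i • (b i) j + a • (b i) j = ((lam i + a) • b i) j
      simp only [PiLp.smul_apply, smul_eq_mul]
      ring
    rw [hbi, real_inner_smul_left]
  -- express inner products via repr
  have key : ∀ x y : EuclideanSpace ℝ (Fin n),
      ⟪x, y⟫ = ∑ i, b.repr x i * b.repr y i := by
    intro x y
    rw [← b.repr.inner_map_map x y, PiLp.inner_apply]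
    simp [RCLike.inner_apply]
    exact Finset.sum_congr rfl fun i _ => mul_comm _ _
  have hinner : ⟪g, p⟫ = ∑ i, b.repr g i * b.repr p i := key g p
  have hnormg : ‖g‖ ^ 2 = ∑ i, (b.repr g i) ^ 2 := by
    rw [← real_inner_self_eq_norm_sq, key g g]
    simp [sq]
  have hreprg : ∀ i, b.repr g i = -((lam i + a) * b.repr p i) := by
    intro i
    have := hrepr i
    rw [map_neg] at this
    simpa [neg_eq_iff_eq_neg] using this
  set c := fun i => b.repr p i with hc
  have h1 : ⟪g, p⟫ = -∑ i, (lam i + a) * c i ^ 2 := by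
    rw [hinner, ← Finset.sum_neg_distrib]
    apply Finset.sum_congr rfl
    intro i _
    rw [hreprg i]; ring
  have h2 : ‖g‖ ^ 2 = ∑ i, ((lam i + a) * c i) ^ 2 := by
    rw [hnormg]
    apply Finset.sum_congr rfl
    intro i _
    rw [hreprg i]; ring
  rw [h1, h2, neg_mul, neg_le_neg_iff, inv_mul_le_iff₀ hcst_pos, Finset.mul_sum]
  apply Finset.sum_le_sum
  intro i _
  have hμ := hmu_pos i
  have hμc := hmu_le i
  nlinarith [sq_nonneg (c i)]
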